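/- Let A be an n×n real Z-matrix (all off-diagonal entries nonpositive) whose associated zero-sum matrix game has value zero. If A is irreducible, then the game is completely mixed: every x ≥ 0 with Σ xᵢ = 1 and Ax ≥ 0 satisfies x > 0 componentwise. -/

import Mathlib

open Matrix

variable {n : ℕ}

/-- A Z-matrix: all off-diagonal entries nonpositive. -/
def IsZMatrix (A : Matrix (Fin n) (Fin n) ℝ) : Prop :=
  ∀ i j, i ≠ j → A i j ≤ 0

/-- Irreducibility of a matrix: for every nonempty proper subset `S` of the indices,
some entry `A i j` with `i ∈ S`, `j ∉ S` is nonzero (equivalently, no simultaneous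
row/column permutation gives a block triangular form with a zero off-diagonal block). -/
def MatIrreducible (A : Matrix (Fin n) (Fin n) ℝ) : Prop :=
  ∀ S : Finset (Fin n), S.Nonempty → S ≠ Finset.univ →
    ∃ i ∈ S, ∃ j, j ∉ S ∧ A i j ≠ 0

/-- The probability simplex in `ℝⁿ`. -/
def probSimplex (n : ℕ) : Set (Fin n → ℝ) :=
  {x | (∀ i, 0 ≤ x i) ∧ ∑ i, x i = 1}

/-- The minimax value of the zero-sum matrix game of `A`. -/
noncomputable def matGameValue (A : Matrix (Fin n) (Fin n) ℝ) : ℝ :=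
  ⨆ x : probSimplex n, ⨅ y : probSimplex n, dotProduct (A.mulVec x) (y : Fin n → ℝ)

/-- an irreducible Z-matrix with game value zero is completely mixed:
every strategy `x` with `A x ≥ 0` is componentwise positive. -/
theorem stmt5 (A : Matrix (Fin n) (Fin n) ℝ)
    (hZ : IsZMatrix A) (hv : matGameValue A = 0) (hirr : MatIrreducible A) :
    ∀ x ∈ probSimplex n, (∀ i, 0 ≤ A.mulVec x i) → ∀ i, 0 < x i := by
  intro x hx hAx i
  by_contra hxi
  have hx0 : ∀ k, 0 ≤ x k := hx.1
  have hxi0 : x i = 0 := le_antisymm (not_lt.1 hxi) (hx0 i)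
  set S : Finset (Fin n) := Finset.univ.filter (fun k => 0 < x k) with hS
  have hSne : S.Nonempty := by
    by_contra h
    have hall : ∀ k, x k = 0 := by
      intro k
      by_contra hk
      exact h ⟨k, Finset.mem_filter.2 ⟨Finset.mem_univ k, lt_of_le_of_ne (hx0 k) (Ne.symm hk)⟩⟩
    have : (∑ k, x k) = 0 := Finset.sum_eq_zero fun k _ => hall k
    rw [hx.2] at this
    norm_num at this
  have hiS : i ∉ S := by simp [hS, hxi0]
  have hScne : Sᶜ.Nonempty := ⟨i, Finset.mem_compl.2 hiS⟩
  have hScnu : Sᶜ ≠ Finset.univ := by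
    intro h
    obtain ⟨k, hk⟩ := hSne
    have : k ∈ Sᶜ := h ▸ Finset.mem_univ k
    exact Finset.mem_compl.1 this hk
  obtain ⟨j, hjSc, k, hkSc, hAjk⟩ := hirr Sᶜ hScne hScnu
  have hjS : j ∉ S := Finset.mem_compl.1 hjSc
  have hkS : k ∈ S := by simpa using hkSc
  have hxk : 0 < x k := (Finset.mem_filter.1 hkS).2
  -- each term of (A.mulVec x) j is nonpositive
  have hterm : ∀ m ∈ Finset.univ, A j m * x m ≤ 0 := by
    intro m _
    rcases eq_or_lt_of_le (hx0 m) with h0 | hpos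
    · rw [← h0, mul_zero]
    · have hmS : m ∈ S := Finset.mem_filter.2 ⟨Finset.mem_univ m, hpos⟩
      have hjm : j ≠ m := fun h => hjS (h ▸ hmS)
      exact mul_nonpos_of_nonpos_of_nonneg (hZ j m hjm) (hx0 m)
  have hsum : (∑ m, A j m * x m) = 0 := by
    have h1 : (∑ m, A j m * x m) ≤ 0 := Finset.sum_nonpos hterm
    have h2 : 0 ≤ (∑ m, A j m * x m) := by
      have := hAx j
      simpa [Matrix.mulVec, dotProduct] using this
    linarith
  have hzero : A j k * x k = 0 :=
    (Finset.sum_eq_zero_iff_of_nonpos hterm).1 hsum k (Finset.mem_univ k)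
  exact hAjk (by
    rcases mul_eq_zero.1 hzero with h | h
    · exact h
    · exact absurd h (ne_of_gt hxk))
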